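/- Let A ⊆ ℝ be compact with bounded complementary intervals of lengths ℓ₁, ℓ₂, …. Then the volume function V_A(r) = λ₁(A_r) is non-differentiable at r > 0 if and only if 2r = ℓ_j for some j, i.e., 2r appears as a gap length of A. -/

import Mathlib

open Set MeasureTheory

/-- The parallel volume function of `A ⊆ ℝ`. -/
noncomputable def parVol (A : Set ℝ) (r : ℝ) : ℝ :=
  (MeasureTheory.volume {x : ℝ | Metric.infDist x A < r}).toReal

/-- `ℓ` is a gap length of the compact set `A ⊆ ℝ` if some bounded complementary interval
of `A` (with endpoints in `A`) has length `ℓ`. -/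
def IsGapLength (A : Set ℝ) (ℓ : ℝ) : Prop :=
  ∃ a b : ℝ, a ∈ A ∧ b ∈ A ∧ a < b ∧ Set.Ioo a b ∩ A = ∅ ∧ b - a = ℓ

/-- A bounded complementary interval of `A`, given by its pair of endpoints. -/
def IsGap (A : Set ℝ) (p : ℝ × ℝ) : Prop :=
  p.1 ∈ A ∧ p.2 ∈ A ∧ p.1 < p.2 ∧ Set.Ioo p.1 p.2 ∩ A = ∅

lemma gap_le_of_lt {A : Set ℝ} {p q : ℝ × ℝ} (hp : IsGap A p) (hq : IsGap A q)
    (h : p.1 < q.1) : p.2 ≤ q.1 := by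
  by_contra hc
  push_neg at hc
  have : q.1 ∈ Set.Ioo p.1 p.2 ∩ A := ⟨⟨h, hc⟩, hq.1⟩
  rw [hp.2.2.2] at this
  exact this

lemma gap_eq_of_fst_eq {A : Set ℝ} {p q : ℝ × ℝ} (hp : IsGap A p) (hq : IsGap A q)
    (h : p.1 = q.1) : p = q := by
  have h2 : p.2 = q.2 := by
    rcases lt_trichotomy p.2 q.2 with hlt | heq | hgt
    · exfalso
      have : p.2 ∈ Set.Ioo q.1 q.2 ∩ A := ⟨⟨h ▸ hp.2.2.1, hlt⟩, hp.2.1⟩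
      rw [hq.2.2.2] at this; exact this
    · exact heq
    · exfalso
      have : q.2 ∈ Set.Ioo p.1 p.2 ∩ A := ⟨⟨h ▸ hq.2.2.1, hgt⟩, hq.2.1⟩
      rw [hp.2.2.2] at this; exact this
  exact Prod.ext h h2

lemma bigGaps_finite (A : Set ℝ) (hA : IsCompact A) (ε : ℝ) (hε : 0 < ε) :
    {p : ℝ × ℝ | IsGap A p ∧ ε < p.2 - p.1}.Finite := by
  set S := {p : ℝ × ℝ | IsGap A p ∧ ε < p.2 - p.1}
  rcases eq_empty_or_nonempty S with hS | hS
  · simp [hS]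
  obtain ⟨p₀, hp₀⟩ := hS
  have hneA : A.Nonempty := ⟨p₀.1, hp₀.1.1⟩
  set m := sInf A; set M := sSup A
  have hm : ∀ a ∈ A, m ≤ a := fun a ha => csInf_le hA.bddBelow ha
  have hM : ∀ a ∈ A, a ≤ M := fun a ha => le_csSup hA.bddAbove ha
  have key : ∀ x y : ℝ, ⌊x / ε⌋ = ⌊y / ε⌋ → y - x < ε := by
    intro x y h
    have h1 := Int.floor_le (x / ε)
    have h2 := Int.lt_floor_add_one (y / ε)
    rw [← h] at h2
    have h3 : y / ε - x / ε < 1 := by linarith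
    rw [div_sub_div_same] at h3
    have := (div_lt_one hε).mp h3
    linarith
  apply Set.Finite.of_finite_image (f := fun p : ℝ × ℝ => ⌊p.1 / ε⌋)
  · apply Set.Finite.subset (Set.finite_Icc ⌊m / ε⌋ ⌊M / ε⌋)
    rintro n ⟨p, hp, rfl⟩
    constructor
    · exact Int.floor_le_floor (by gcongr; exact hm _ hp.1.1)
    · exact Int.floor_le_floor (by gcongr; exact hM _ hp.1.1)
  · intro p hp q hq hfl
    simp only at hfl
    rcases lt_trichotomy p.1 q.1 with hlt | heq | hgt
    · exfalso
      have h1 : ε < q.1 - p.1 := lt_of_lt_of_le hp.2 (by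
        have := gap_le_of_lt hp.1 hq.1 hlt; linarith)
      have := key p.1 q.1 hfl
      linarith
    · exact gap_eq_of_fst_eq hp.1 hq.1 heq
    · exfalso
      have h1 : ε < p.1 - q.1 := lt_of_lt_of_le hq.2 (by
        have := gap_le_of_lt hq.1 hp.1 hgt; linarith)
      have := key q.1 p.1 hfl.symm
      linarith

lemma parVol_eq (A : Set ℝ) (hA : IsCompact A) (hne : A.Nonempty) (ε : ℝ) (hε : 0 < ε)
    (G : Finset (ℝ × ℝ)) (hG : ∀ p, p ∈ G ↔ IsGap A p ∧ ε < p.2 - p.1)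
    (r : ℝ) (hr : ε / 2 < r) :
    parVol A r = (sSup A - sInf A + 2 * r) - ∑ p ∈ G, max (p.2 - p.1 - 2 * r) 0 := by
  have hr0 : 0 < r := by linarith
  set m := sInf A with hm_def
  set M := sSup A with hM_def
  have hmA : m ∈ A := hA.sInf_mem hne
  have hMA : M ∈ A := hA.sSup_mem hne
  have hm : ∀ a ∈ A, m ≤ a := fun a ha => csInf_le hA.bddBelow ha
  have hM : ∀ a ∈ A, a ≤ M := fun a ha => le_csSup hA.bddAbove ha
  have hmM : m ≤ M := hm M hMA
  -- the set identity
  have hset : {x : ℝ | Metric.infDist x A < r} =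
      Ioo (m - r) (M + r) \ ⋃ p ∈ G, Icc (p.1 + r) (p.2 - r) := by
    ext x
    simp only [mem_setOf_eq, mem_diff, mem_Ioo, mem_iUnion, mem_Icc, not_exists]
    constructor
    · intro h
      obtain ⟨a, haA, hax⟩ := (Metric.infDist_lt_iff hne).mp h
      rw [Real.dist_eq, abs_lt] at hax
      refine ⟨⟨by have := hm a haA; linarith, by have := hM a haA; linarith⟩, ?_⟩
      rintro p hp ⟨h1, h2⟩
      have hgap := (hG p).mp hp
      have : a ∉ Set.Ioo p.1 p.2 := by
        intro hc
        have : a ∈ Set.Ioo p.1 p.2 ∩ A := ⟨hc, haA⟩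
        rw [hgap.1.2.2.2] at this; exact this
      rw [Set.mem_Ioo, not_and_or, not_lt, not_lt] at this
      rcases this with h3 | h3 <;> linarith
    · rintro ⟨⟨hx1, hx2⟩, hx3⟩
      rw [Metric.infDist_lt_iff hne]
      by_cases hxA : x ∈ A
      · exact ⟨x, hxA, by simpa using hr0⟩
      rcases lt_trichotomy x m with hlt | heq | hgt
      · exact ⟨m, hmA, by rw [Real.dist_eq, abs_lt]; constructor <;> linarith⟩
      · exact absurd (heq ▸ hmA) hxA
      rcases lt_trichotomy x M with hlt' | heq' | hgt'
      swap
      · exact absurd (heq' ▸ hMA) hxA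
      swap
      · exact ⟨M, hMA, by rw [Real.dist_eq, abs_lt]; constructor <;> linarith⟩
      -- m < x < M, x ∉ A : find the gap containing x
      set a := sSup (A ∩ Iic x) with ha_def
      set b := sInf (A ∩ Ici x) with hb_def
      have hLne : (A ∩ Iic x).Nonempty := ⟨m, hmA, le_of_lt hgt⟩
      have hRne : (A ∩ Ici x).Nonempty := ⟨M, hMA, le_of_lt hlt'⟩
      have hLcl : IsClosed (A ∩ Iic x) := hA.isClosed.inter isClosed_Iic
      have hRcl : IsClosed (A ∩ Ici x) := hA.isClosed.inter isClosed_Ici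
      have haMem : a ∈ A ∩ Iic x :=
        hLcl.csSup_mem hLne (hA.bddAbove.mono inter_subset_left)
      have hbMem : b ∈ A ∩ Ici x :=
        hRcl.csInf_mem hRne (hA.bddBelow.mono inter_subset_left)
      have hax : a < x := lt_of_le_of_ne haMem.2 (fun h => hxA (h ▸ haMem.1))
      have hxb : x < b := lt_of_le_of_ne hbMem.2 (fun h => hxA (h.symm ▸ hbMem.1))
      have hgap : IsGap A (a, b) := by
        refine ⟨haMem.1, hbMem.1, hax.trans hxb, ?_⟩
        rw [Set.eq_empty_iff_forall_notMem]
        rintro y ⟨⟨hy1, hy2⟩, hyA⟩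
        simp only at hy1 hy2
        rcases le_or_gt y x with hyx | hyx
        · have : y ≤ a := le_csSup (hA.bddAbove.mono inter_subset_left)
            (show y ∈ A ∩ Iic x from ⟨hyA, hyx⟩)
          linarith
        · have : b ≤ y := csInf_le (hA.bddBelow.mono inter_subset_left)
            (show y ∈ A ∩ Ici x from ⟨hyA, hyx.le⟩)
          linarith
      by_cases hbig : ε < b - a
      · -- big gap: it is in G, use hx3
        have hpG : (a, b) ∈ G := (hG (a, b)).mpr ⟨hgap, hbig⟩
        have := hx3 (a, b) hpG
        rw [not_and_or, not_le, not_le] at this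
        rcases this with h | h
        · exact ⟨a, haMem.1, by rw [Real.dist_eq, abs_lt]; constructor <;>
            simp only at h ⊢ <;> linarith⟩
        · exact ⟨b, hbMem.1, by rw [Real.dist_eq, abs_lt]; constructor <;>
            simp only at h ⊢ <;> linarith⟩
      · -- small gap: length ≤ ε < 2r
        push_neg at hbig
        rcases le_or_gt (x - a) (b - x) with hc | hc
        · exact ⟨a, haMem.1, by rw [Real.dist_eq, abs_lt]; constructor <;> linarith⟩
        · exact ⟨b, hbMem.1, by rw [Real.dist_eq, abs_lt]; constructor <;> linarith⟩
  -- measure computation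
  have hIccSub : ∀ p ∈ G, Icc (p.1 + r) (p.2 - r) ⊆ Ioo (m - r) (M + r) := by
    intro p hp y hy
    have hgap := (hG p).mp hp
    have h1 := hm p.1 hgap.1.1
    have h2 := hM p.2 hgap.1.2.1
    exact ⟨by have := hy.1; linarith, by have := hy.2; linarith⟩
  have hdisj : (G : Set (ℝ × ℝ)).PairwiseDisjoint
      (fun p : ℝ × ℝ => Icc (p.1 + r) (p.2 - r)) := by
    intro p hp q hq hpq
    have hgp := ((hG p).mp hp).1
    have hgq := ((hG q).mp hq).1
    rcases lt_trichotomy p.1 q.1 with hlt | heq | hgt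
    · have := gap_le_of_lt hgp hgq hlt
      apply Set.disjoint_left.mpr
      rintro y ⟨_, hy2⟩ ⟨hy3, _⟩
      linarith
    · exact absurd (gap_eq_of_fst_eq hgp hgq heq) hpq
    · have := gap_le_of_lt hgq hgp hgt
      apply Set.disjoint_left.mpr
      rintro y ⟨hy1, _⟩ ⟨_, hy4⟩
      linarith
  have hSsub : (⋃ p ∈ G, Icc (p.1 + r) (p.2 - r)) ⊆ Ioo (m - r) (M + r) :=
    Set.iUnion₂_subset hIccSub
  have hSmeas : MeasurableSet (⋃ p ∈ G, Icc (p.1 + r) (p.2 - r)) :=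
    G.measurableSet_biUnion (fun p _ => measurableSet_Icc)
  have hvolS : volume (⋃ p ∈ G, Icc (p.1 + r) (p.2 - r)) =
      ENNReal.ofReal (∑ p ∈ G, max (p.2 - p.1 - 2 * r) 0) := by
    rw [measure_biUnion_finset hdisj (fun p _ => measurableSet_Icc)]
    rw [ENNReal.ofReal_sum_of_nonneg (fun p _ => le_max_right _ _)]
    apply Finset.sum_congr rfl
    intro p _
    rw [Real.volume_Icc]
    rcases le_or_gt (p.2 - p.1 - 2 * r) 0 with h | h
    · rw [max_eq_right h, ENNReal.ofReal_zero, ENNReal.ofReal_eq_zero]; linarith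
    · rw [max_eq_left h.le]; congr 1; ring
  have hsum_nonneg : 0 ≤ ∑ p ∈ G, max (p.2 - p.1 - 2 * r) 0 :=
    Finset.sum_nonneg (fun p _ => le_max_right _ _)
  have hsum_le : ∑ p ∈ G, max (p.2 - p.1 - 2 * r) 0 ≤ M - m + 2 * r := by
    have h1 : volume (⋃ p ∈ G, Icc (p.1 + r) (p.2 - r)) ≤ volume (Ioo (m - r) (M + r)) :=
      measure_mono hSsub
    rw [hvolS, Real.volume_Ioo] at h1
    have h2 : M + r - (m - r) = M - m + 2 * r := by ring
    rw [h2] at h1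
    exact (ENNReal.ofReal_le_ofReal_iff (by linarith)).mp h1
  rw [parVol, hset]
  rw [measure_diff hSsub hSmeas.nullMeasurableSet
    (lt_of_le_of_lt (measure_mono hSsub) (by rw [Real.volume_Ioo]; exact ENNReal.ofReal_lt_top)).ne]
  rw [Real.volume_Ioo, hvolS]
  rw [← ENNReal.ofReal_sub _ hsum_nonneg]
  rw [ENNReal.toReal_ofReal (by linarith)]
  ring

lemma not_diff_max (r₀ : ℝ) :
    ¬ DifferentiableAt ℝ (fun r : ℝ => max (2 * r₀ - 2 * r) 0) r₀ := by
  intro h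
  set f : ℝ → ℝ := fun r => max (2 * r₀ - 2 * r) 0 with hf
  have hd := h.hasDerivAt
  set d := deriv f r₀ with hd_def
  -- right derivative is 0
  have hright : HasDerivWithinAt f 0 (Ici r₀) r₀ := by
    apply (hasDerivWithinAt_const r₀ (Ici r₀) (0:ℝ)).congr
    · intro y hy
      exact max_eq_right (by simp only [mem_Ici] at hy; linarith)
    · simp [hf]
  have hleft : HasDerivWithinAt f (-2) (Iic r₀) r₀ := by
    have hlin : HasDerivWithinAt (fun r : ℝ => 2 * r₀ - 2 * r) (-2) (Iic r₀) r₀ := by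
      have : HasDerivAt (fun r : ℝ => 2 * r₀ - 2 * r) (-2) r₀ := by
        simpa using ((hasDerivAt_id r₀).const_mul 2).const_sub (2 * r₀)
      exact this.hasDerivWithinAt
    apply hlin.congr
    · intro y hy
      exact max_eq_left (by simp only [mem_Iic] at hy; linarith)
    · simp [hf]
  have h1 : d = 0 := by
    have := hd.hasDerivWithinAt (s := Ici r₀)
    rw [← this.derivWithin (uniqueDiffOn_Ici r₀ r₀ Set.self_mem_Ici),
        ← hright.derivWithin (uniqueDiffOn_Ici r₀ r₀ Set.self_mem_Ici)]
  have h2 : d = -2 := by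
    have := hd.hasDerivWithinAt (s := Iic r₀)
    rw [← this.derivWithin (uniqueDiffOn_Iic r₀ r₀ Set.self_mem_Iic),
        ← hleft.derivWithin (uniqueDiffOn_Iic r₀ r₀ Set.self_mem_Iic)]
  rw [h1] at h2
  norm_num at h2

lemma diff_max_of_ne (ℓ r₀ : ℝ) (h : ℓ ≠ 2 * r₀) :
    DifferentiableAt ℝ (fun r : ℝ => max (ℓ - 2 * r) 0) r₀ := by
  rcases lt_or_gt_of_ne h with hlt | hgt
  · -- ℓ < 2 r₀ : eventually 0
    have hev : ∀ᶠ r in nhds r₀, ℓ - 2 * r < 0 := by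
      have : Filter.Tendsto (fun r : ℝ => ℓ - 2 * r) (nhds r₀) (nhds (ℓ - 2 * r₀)) :=
        Continuous.tendsto (by continuity) r₀
      exact this.eventually_lt_const (by linarith)
    have heq : (fun r : ℝ => max (ℓ - 2 * r) 0) =ᶠ[nhds r₀] fun _ => (0 : ℝ) :=
      hev.mono (fun r hr => max_eq_right hr.le)
    exact (differentiableAt_const 0).congr_of_eventuallyEq heq
  · have hev : ∀ᶠ r in nhds r₀, 0 < ℓ - 2 * r := by
      have : Filter.Tendsto (fun r : ℝ => ℓ - 2 * r) (nhds r₀) (nhds (ℓ - 2 * r₀)) :=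
        Continuous.tendsto (by continuity) r₀
      exact this.eventually_const_lt (by linarith)
    have heq : (fun r : ℝ => max (ℓ - 2 * r) 0) =ᶠ[nhds r₀] fun r => ℓ - 2 * r :=
      hev.mono (fun r hr => max_eq_left hr.le)
    exact DifferentiableAt.congr_of_eventuallyEq (by fun_prop) heq

/-- For a nonempty compact `A ⊆ ℝ`, the parallel volume function is non-differentiable at
`r > 0` if and only if `2r` appears as a gap length of `A`. -/
theorem stmt8 (A : Set ℝ) (hA : IsCompact A) (hne : A.Nonempty) (r : ℝ) (hr : 0 < r) :
    ¬ DifferentiableAt ℝ (parVol A) r ↔ IsGapLength A (2 * r) := by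
  set G := (bigGaps_finite A hA r hr).toFinset with hGdef
  have hG : ∀ p, p ∈ G ↔ IsGap A p ∧ r < p.2 - p.1 := fun p => Set.Finite.mem_toFinset _
  have hev : parVol A =ᶠ[nhds r]
      fun s => (sSup A - sInf A + 2 * s) - ∑ p ∈ G, max (p.2 - p.1 - 2 * s) 0 := by
    filter_upwards [Ioi_mem_nhds (show r / 2 < r by linarith)] with s hs
    exact parVol_eq A hA hne r hr G hG s hs
  have haff : DifferentiableAt ℝ (fun s : ℝ => sSup A - sInf A + 2 * s) r := by
    apply DifferentiableAt.add (differentiableAt_const _)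
    exact (differentiableAt_fun_id).const_mul 2
  have hdiff_iff : DifferentiableAt ℝ (parVol A) r ↔
      DifferentiableAt ℝ (fun s => ∑ p ∈ G, max (p.2 - p.1 - 2 * s) 0) r := by
    rw [hev.differentiableAt_iff]
    constructor
    · intro h
      have h2 := haff.fun_sub h
      have heq : (fun s => (sSup A - sInf A + 2 * s) -
          ((sSup A - sInf A + 2 * s) - ∑ p ∈ G, max (p.2 - p.1 - 2 * s) 0)) =
          fun s => ∑ p ∈ G, max (p.2 - p.1 - 2 * s) 0 := funext fun s => by ring
      rwa [heq] at h2
    · intro h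
      exact haff.sub h
  set G1 := G.filter (fun p => p.2 - p.1 = 2 * r) with hG1def
  have hsplit : ∀ s : ℝ, ∑ p ∈ G, max (p.2 - p.1 - 2 * s) 0 =
      (∑ p ∈ G1, max (p.2 - p.1 - 2 * s) 0) +
      ∑ p ∈ G.filter (fun p => ¬ (p.2 - p.1 = 2 * r)), max (p.2 - p.1 - 2 * s) 0 :=
    fun s => (Finset.sum_filter_add_sum_filter_not G _ _).symm
  have hG2diff : DifferentiableAt ℝ
      (fun s => ∑ p ∈ G.filter (fun p => ¬ (p.2 - p.1 = 2 * r)),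
        max (p.2 - p.1 - 2 * s) 0) r := by
    apply DifferentiableAt.fun_sum
    intro p hp
    exact diff_max_of_ne _ _ (Finset.mem_filter.mp hp).2
  have hG1sum : ∀ s : ℝ, ∑ p ∈ G1, max (p.2 - p.1 - 2 * s) 0 =
      (G1.card : ℝ) * max (2 * r - 2 * s) 0 := by
    intro s
    rw [Finset.sum_congr rfl (fun p hp => by rw [(Finset.mem_filter.mp hp).2])]
    rw [Finset.sum_const, nsmul_eq_mul]
  constructor
  · intro hnd
    by_contra hng
    apply hnd
    have hG1 : G1 = ∅ := by
      rw [Finset.eq_empty_iff_forall_notMem]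
      intro p hp
      obtain ⟨hpG, hlen⟩ := Finset.mem_filter.mp hp
      have hgap := ((hG p).mp hpG).1
      exact hng ⟨p.1, p.2, hgap.1, hgap.2.1, hgap.2.2.1, hgap.2.2.2, hlen⟩
    rw [hdiff_iff]
    have heq : (fun s => ∑ p ∈ G, max (p.2 - p.1 - 2 * s) 0) =
        fun s => ∑ p ∈ G.filter (fun p => ¬ (p.2 - p.1 = 2 * r)),
          max (p.2 - p.1 - 2 * s) 0 :=
      funext fun s => by rw [hsplit s, hG1]; simp
    rw [heq]
    exact hG2diff
  · intro hgl hd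
    obtain ⟨a, b, haA, hbA, hab, hIoo, hlen⟩ := hgl
    have hpG1 : (a, b) ∈ G1 := by
      refine Finset.mem_filter.mpr ⟨(hG _).mpr ⟨⟨haA, hbA, hab, hIoo⟩, ?_⟩, ?_⟩
      · simp only; linarith
      · simpa using hlen
    have hk : (0 : ℝ) < G1.card := by
      exact_mod_cast Finset.card_pos.mpr ⟨_, hpG1⟩
    have hsumdiff := hdiff_iff.mp hd
    have hmul : DifferentiableAt ℝ (fun s => (G1.card : ℝ) * max (2 * r - 2 * s) 0) r := by
      have heq : (fun s => (G1.card : ℝ) * max (2 * r - 2 * s) 0) =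
          fun s => (∑ p ∈ G, max (p.2 - p.1 - 2 * s) 0) -
            ∑ p ∈ G.filter (fun p => ¬ (p.2 - p.1 = 2 * r)), max (p.2 - p.1 - 2 * s) 0 :=
        funext fun s => by rw [hsplit s, hG1sum s]; ring
      rw [heq]
      exact hsumdiff.sub hG2diff
    have hfin := hmul.const_mul ((G1.card : ℝ)⁻¹)
    apply not_diff_max r
    have heq2 : (fun s => (G1.card : ℝ)⁻¹ * ((G1.card : ℝ) * max (2 * r - 2 * s) 0)) =
        fun s => max (2 * r - 2 * s) 0 := funext fun s => by
      rw [← mul_assoc, inv_mul_cancel₀ (ne_of_gt hk), one_mul]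
    rwa [heq2] at hfin
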